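/- There exists a clustering OPT' in which every non-singleton cluster is δ-clean and whose number of disagreements is at most (9/δ² + 1) times the minimum number of disagreements, for any 0 < δ < 1. -/

import Mathlib

attribute [local instance] Classical.propDecidable
def Nplus {V : Type*} [Fintype V] [DecidableEq V] (pos : V → V → Bool) (v : V) : Finset V :=
  insert v (Finset.univ.filter (fun u => pos u v = true))

def IsGood {V : Type*} [Fintype V] [DecidableEq V]
    (pos : V → V → Bool) (δ : ℝ) (v : V) (C : Finset V) : Prop :=
  (1 - δ) * (C.card : ℝ) ≤ ((Nplus pos v ∩ C).card : ℝ) ∧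
  ((Nplus pos v ∩ Cᶜ).card : ℝ) ≤ δ * (C.card : ℝ)

def IsClean {V : Type*} [Fintype V] [DecidableEq V]
    (pos : V → V → Bool) (δ : ℝ) (C : Finset V) : Prop :=
  ∀ v ∈ C, IsGood pos δ v C

def Disagree {V : Type*} (pos : V → V → Bool) (c : V → ℕ) (u v : V) : Prop :=
  (pos u v = true ∧ c u ≠ c v) ∨ (pos u v = false ∧ c u = c v)

noncomputable def disagreements {V : Type*} [Fintype V] [LinearOrder V]
    (pos : V → V → Bool) (c : V → ℕ) : ℕ :=
  (Finset.univ.filter (fun p : V × V => p.1 < p.2 ∧ Disagree pos c p.1 p.2)).card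

open Finset

section Aux
variable {V : Type*} [Fintype V] [LinearOrder V]

lemma disagree_symm (pos : V → V → Bool) (hsym : ∀ u v, pos u v = pos v u)
    (c : V → ℕ) {u v : V} (h : Disagree pos c u v) : Disagree pos c v u := by
  rcases h with ⟨h1, h2⟩ | ⟨h1, h2⟩
  · exact Or.inl ⟨by rw [hsym]; exact h1, fun e => h2 e.symm⟩
  · exact Or.inr ⟨by rw [hsym]; exact h1, h2.symm⟩

noncomputable def mcount (pos : V → V → Bool) (c : V → ℕ) (v : V) : ℕ :=
  (univ.filter (fun u => u ≠ v ∧ Disagree pos c u v)).card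

noncomputable def clusterOf (c : V → ℕ) (i : ℕ) : Finset V :=
  univ.filter (fun v => c v = i)

lemma sum_mcount (pos : V → V → Bool) (hsym : ∀ u v, pos u v = pos v u) (c : V → ℕ) :
    ∑ v, mcount pos c v = 2 * disagreements pos c := by
  classical
  set D := univ.filter (fun p : V × V => p.1 < p.2 ∧ Disagree pos c p.1 p.2) with hD
  set A := univ.filter (fun p : V × V => p.1 ≠ p.2 ∧ Disagree pos c p.1 p.2) with hA
  have h1 : A.card = ∑ v, mcount pos c v := by
    rw [card_eq_sum_card_fiberwise (f := Prod.snd) (t := univ) (fun x _ => mem_univ _)]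
    refine Finset.sum_congr rfl fun v _ => ?_
    unfold mcount
    have himg : A.filter (fun p => p.2 = v)
        = (univ.filter (fun u => u ≠ v ∧ Disagree pos c u v)).image (fun u => (u, v)) := by
      ext p
      simp only [hA, mem_filter, mem_univ, true_and, mem_image]
      constructor
      · rintro ⟨⟨hne, hd⟩, h2⟩
        exact ⟨p.1, ⟨by rw [h2] at hne; exact hne, by rw [h2] at hd; exact hd⟩,
          by rw [← h2]⟩
      · rintro ⟨u, ⟨hne, hd⟩, rfl⟩
        exact ⟨⟨hne, hd⟩, rfl⟩
    rw [himg, Finset.card_image_of_injective _ (fun a b h => (Prod.mk.injEq _ _ _ _ ▸ h).1)]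
    congr
  have hswap : A = D ∪ D.image Prod.swap := by
    ext p
    simp only [hA, hD, mem_filter, mem_univ, true_and, mem_union, mem_image]
    constructor
    · rintro ⟨hne, hd⟩
      rcases lt_or_gt_of_ne hne with h | h
      · exact Or.inl ⟨h, hd⟩
      · exact Or.inr ⟨p.swap, ⟨h, disagree_symm pos hsym c hd⟩, Prod.swap_swap p⟩
    · rintro (⟨h, hd⟩ | ⟨q, ⟨h, hd⟩, rfl⟩)
      · exact ⟨ne_of_lt h, hd⟩
      · exact ⟨ne_of_gt h, disagree_symm pos hsym c hd⟩
  have hdisj : Disjoint D (D.image Prod.swap) := by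
    rw [Finset.disjoint_left]
    rintro p hp hp2
    rcases Finset.mem_image.1 hp2 with ⟨q, hq, rfl⟩
    simp only [hD, mem_filter] at hp hq
    exact absurd (hp.2.1.trans hq.2.1) (lt_irrefl _)
  have hcard : A.card = D.card + D.card := by
    rw [hswap, card_union_of_disjoint hdisj,
      Finset.card_image_of_injective _ Prod.swap_injective]
  rw [← h1, hcard, two_mul, hD]
  unfold disagreements
  congr

lemma mcount_of_bad (pos : V → V → Bool) (c : V → ℕ) {δ' : ℝ} (v : V)
    (hbad : ¬ IsGood pos δ' v (clusterOf c (c v))) :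
    δ' * ((clusterOf c (c v)).card : ℝ) ≤ (mcount pos c v : ℝ) := by
  set C := clusterOf c (c v) with hC
  rw [IsGood, not_and_or] at hbad
  have hvC : v ∈ C := Finset.mem_filter.2 ⟨mem_univ _, rfl⟩
  rcases hbad with h | h
  · push_neg at h
    have hsub : C \ Nplus pos v ⊆ univ.filter (fun u => u ≠ v ∧ Disagree pos c u v) := by
      intro u hu
      rcases Finset.mem_sdiff.1 hu with ⟨huC, huN⟩
      have hne : u ≠ v := fun e => huN (by rw [e]; exact Finset.mem_insert_self v _)
      have hpos : pos u v = false := by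
        rcases Bool.eq_false_or_eq_true (pos u v) with ht | hf
        · exact absurd (show u ∈ Nplus pos v by simp [Nplus, ht]) huN
        · exact hf
      have hcc : c u = c v := by
        simp only [hC, clusterOf, mem_filter] at huC; exact huC.2
      exact Finset.mem_filter.2 ⟨mem_univ _, hne, Or.inr ⟨hpos, hcc⟩⟩
    have h1 : ((C \ Nplus pos v).card : ℝ) ≤ (mcount pos c v : ℝ) := by
      unfold mcount; exact_mod_cast Finset.card_le_card hsub
    have h2 : (C.card : ℕ) = (C ∩ Nplus pos v).card + (C \ Nplus pos v).card :=
      (Finset.card_inter_add_card_sdiff C (Nplus pos v)).symm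
    have h3 : ((Nplus pos v ∩ C).card : ℝ) = ((C ∩ Nplus pos v).card : ℝ) := by
      rw [Finset.inter_comm]
    have h2' : ((C.card : ℝ)) = ((C ∩ Nplus pos v).card : ℝ) + ((C \ Nplus pos v).card : ℝ) := by
      exact_mod_cast h2
    nlinarith [h]
  · push_neg at h
    have hsub : Nplus pos v ∩ Cᶜ ⊆ univ.filter (fun u => u ≠ v ∧ Disagree pos c u v) := by
      intro u hu
      rcases Finset.mem_inter.1 hu with ⟨huN, huCc⟩
      have huC : u ∉ C := by simpa using huCc
      have hne : u ≠ v := fun e => huC (e ▸ hvC)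
      have hpos : pos u v = true := by
        rcases Finset.mem_insert.1 huN with h' | h'
        · exact absurd h' hne
        · simpa using h'
      have hcc : c u ≠ c v := by
        intro e
        exact huC (by simp [hC, clusterOf, e])
      exact Finset.mem_filter.2 ⟨mem_univ _, hne, Or.inl ⟨hpos, hcc⟩⟩
    have h1 : ((Nplus pos v ∩ Cᶜ).card : ℝ) ≤ (mcount pos c v : ℝ) := by
      unfold mcount; exact_mod_cast Finset.card_le_card hsub
    linarith

end Aux

section Main
open Finset
variable {V : Type*} [Fintype V] [LinearOrder V]

lemma mem_clusterOf {c : V → ℕ} {i : ℕ} {v : V} : v ∈ clusterOf c i ↔ c v = i := by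
  simp [clusterOf]

lemma exists_clean_of (pos : V → V → Bool) (hsym : ∀ u v, pos u v = pos v u)
    (δ : ℝ) (hδ0 : 0 < δ) (hδ1 : δ < 1) (c : V → ℕ) :
    ∃ c' : V → ℕ,
      (∀ i : ℕ, 2 ≤ (Finset.univ.filter (fun v => c' v = i)).card →
        IsClean pos δ (Finset.univ.filter (fun v => c' v = i))) ∧
      (disagreements pos c' : ℝ) ≤ (9 / δ ^ 2 + 1) * (disagreements pos c : ℝ) := by
  set δ' : ℝ := δ / 3 with hδ'
  have hδ'0 : 0 < δ' := by rw [hδ']; linarith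
  have hδ'3 : δ' < 1 / 3 := by rw [hδ']; linarith
  set Bad : Finset V := univ.filter (fun v => ¬ IsGood pos δ' v (clusterOf c (c v))) with hBad
  set Dis : ℕ → Prop :=
    fun i => δ' * ((clusterOf c i).card : ℝ) ≤ ((Bad ∩ clusterOf c i).card : ℝ) with hDis
  set kept : V → Prop := fun v => v ∉ Bad ∧ ¬ Dis (c v) with hkept
  set idx : V → ℕ := fun v => ((Fintype.equivFin V) v : ℕ) with hidx
  have hidxinj : Function.Injective idx := fun a b h =>
    (Fintype.equivFin V).injective (Fin.val_injective h)
  set c' : V → ℕ := fun v => if kept v then 2 * c v else 2 * idx v + 1 with hc'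
  have hc'kept : ∀ v, kept v → c' v = 2 * c v := by
    intro v hv; simp only [hc']; exact if_pos hv
  have hc'not : ∀ v, ¬ kept v → c' v = 2 * idx v + 1 := by
    intro v hv; simp only [hc']; exact if_neg hv
  refine ⟨c', ?_, ?_⟩
  · -- cleanliness
    intro i hcard
    set Ci := univ.filter (fun v => c' v = i) with hCi
    have hmemCi : ∀ u, u ∈ Ci ↔ c' u = i := by
      intro u; simp [hCi]
    have hkeptAll : ∀ v ∈ Ci, kept v := by
      intro v hv
      by_contra hk
      have hc'v : c' v = 2 * idx v + 1 := hc'not v hk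
      have hsub : Ci ⊆ {v} := by
        intro u hu
        have hc'u : c' u = i := (hmemCi u).1 hu
        have hc'v' : c' v = i := (hmemCi v).1 hv
        rcases em (kept u) with hku | hku
        · exfalso
          have h1 : c' u = 2 * c u := hc'kept u hku
          have h2 : 2 * c u = 2 * idx v + 1 := by rw [← h1, hc'u, ← hc'v', hc'v]
          omega
        · have h1 : c' u = 2 * idx u + 1 := hc'not u hku
          have h2 : 2 * idx u + 1 = 2 * idx v + 1 := by rw [← h1, hc'u, ← hc'v', hc'v]
          have h3 : u = v := hidxinj (by omega)
          simp [h3]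
      have := Finset.card_le_card hsub
      simp only [Finset.card_singleton] at this
      omega
    obtain ⟨v₀, hv₀⟩ := Finset.card_pos.mp (by omega : 0 < Ci.card)
    have hk₀ : kept v₀ := hkeptAll v₀ hv₀
    have hi : i = 2 * c v₀ := by rw [← (hmemCi v₀).1 hv₀, hc'kept v₀ hk₀]
    set j := c v₀ with hj
    have hnd : ¬ Dis j := hk₀.2
    have hCiEq : Ci = clusterOf c j \ Bad := by
      ext u
      rw [hmemCi u, Finset.mem_sdiff, mem_clusterOf]
      constructor
      · intro hu
        have hku : kept u := hkeptAll u ((hmemCi u).2 hu)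
        have h1 : c' u = 2 * c u := hc'kept u hku
        have hcu : c u = j := by omega
        exact ⟨hcu, hku.1⟩
      · rintro ⟨hcu, huB⟩
        have hku : kept u := ⟨huB, by rw [hcu]; exact hnd⟩
        rw [hc'kept u hku, hcu, hi]
    intro v hv
    have hvmem : v ∈ clusterOf c j ∧ v ∉ Bad := Finset.mem_sdiff.1 (by rw [← hCiEq]; exact hv)
    have hgood : IsGood pos δ' v (clusterOf c j) := by
      have h1 := hvmem.2
      simp only [hBad, Finset.mem_filter, Finset.mem_univ, true_and, not_not] at h1
      rwa [mem_clusterOf.1 hvmem.1] at h1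
    obtain ⟨hg1, hg2⟩ := hgood
    have hkb : (Ci.card : ℝ) + ((Bad ∩ clusterOf c j).card : ℝ)
        = ((clusterOf c j).card : ℝ) := by
      have h1 := Finset.card_sdiff_add_card_inter (clusterOf c j) Bad
      rw [Finset.inter_comm] at h1
      rw [hCiEq]
      exact_mod_cast h1
    have hbn : ((Bad ∩ clusterOf c j).card : ℝ) ≤ δ' * ((clusterOf c j).card : ℝ) := by
      have := hnd
      simp only [hDis] at this
      push_neg at this
      linarith
    have hb0 : (0:ℝ) ≤ ((Bad ∩ clusterOf c j).card : ℝ) := Nat.cast_nonneg _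
    have hk0 : (0:ℝ) ≤ (Ci.card : ℝ) := Nat.cast_nonneg _
    have hn0 : (0:ℝ) ≤ ((clusterOf c j).card : ℝ) := Nat.cast_nonneg _
    constructor
    · -- positive neighbours inside
      have hsub : Nplus pos v ∩ clusterOf c j ⊆ (Nplus pos v ∩ Ci) ∪ (Bad ∩ clusterOf c j) := by
        intro u hu
        rcases Finset.mem_inter.1 hu with ⟨h1, h2⟩
        by_cases hb : u ∈ Bad
        · exact Finset.mem_union_right _ (Finset.mem_inter.2 ⟨hb, h2⟩)
        · refine Finset.mem_union_left _ (Finset.mem_inter.2 ⟨h1, ?_⟩)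
          rw [hCiEq]; exact Finset.mem_sdiff.2 ⟨h2, hb⟩
      have hcard1 : ((Nplus pos v ∩ clusterOf c j).card : ℝ)
          ≤ ((Nplus pos v ∩ Ci).card : ℝ) + ((Bad ∩ clusterOf c j).card : ℝ) := by
        have h1 := Finset.card_le_card hsub
        have h2 := Finset.card_union_le (Nplus pos v ∩ Ci) (Bad ∩ clusterOf c j)
        exact_mod_cast le_trans h1 h2
      have ha0 : (0:ℝ) ≤ ((Nplus pos v ∩ Ci).card : ℝ) := Nat.cast_nonneg _
      nlinarith [mul_le_mul_of_nonneg_left hbn hδ'0.le, mul_nonneg hδ'0.le hn0,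
        mul_nonneg hδ'0.le hk0, mul_nonneg hδ'0.le hb0]
    · -- positive neighbours outside
      have hsub : Nplus pos v ∩ Ciᶜ
          ⊆ (Nplus pos v ∩ (clusterOf c j)ᶜ) ∪ (Bad ∩ clusterOf c j) := by
        intro u hu
        rcases Finset.mem_inter.1 hu with ⟨h1, h2⟩
        have h2' : u ∉ Ci := by simpa using h2
        by_cases hcl : u ∈ clusterOf c j
        · have hb : u ∈ Bad := by
            by_contra hb
            exact h2' (by rw [hCiEq]; exact Finset.mem_sdiff.2 ⟨hcl, hb⟩)
          exact Finset.mem_union_right _ (Finset.mem_inter.2 ⟨hb, hcl⟩)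
        · exact Finset.mem_union_left _ (Finset.mem_inter.2 ⟨h1, by simpa using hcl⟩)
      have hcard2 : ((Nplus pos v ∩ Ciᶜ).card : ℝ)
          ≤ ((Nplus pos v ∩ (clusterOf c j)ᶜ).card : ℝ) + ((Bad ∩ clusterOf c j).card : ℝ) := by
        have h1 := Finset.card_le_card hsub
        have h2 := Finset.card_union_le (Nplus pos v ∩ (clusterOf c j)ᶜ) (Bad ∩ clusterOf c j)
        exact_mod_cast le_trans h1 h2
      nlinarith [mul_le_mul_of_nonneg_left hbn hδ'0.le, mul_nonneg hδ'0.le hn0,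
        mul_nonneg hδ'0.le hk0, mul_nonneg hδ'0.le hb0,
        mul_nonneg (mul_nonneg hδ'0.le hδ'0.le) hn0]
  · -- cost bound
    set D := univ.filter (fun p : V × V => p.1 < p.2 ∧ Disagree pos c p.1 p.2) with hD
    set D' := univ.filter (fun p : V × V => p.1 < p.2 ∧ Disagree pos c' p.1 p.2) with hD'
    have hDcard : disagreements pos c = D.card := by
      unfold disagreements; rw [hD]
    have hD'card : disagreements pos c' = D'.card := by
      unfold disagreements; rw [hD']
    have hsplit : D'.card ≤ D.card + (D' \ D).card := by
      have h1 : D' = (D' \ D) ∪ (D' ∩ D) := (Finset.sdiff_union_inter D' D).symm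
      calc D'.card = ((D' \ D) ∪ (D' ∩ D)).card := by rw [← h1]
        _ ≤ (D' \ D).card + (D' ∩ D).card := Finset.card_union_le _ _
        _ ≤ D.card + (D' \ D).card := by
            have h2 : (D' ∩ D).card ≤ D.card := Finset.card_le_card Finset.inter_subset_right
            omega
    -- structure of new disagreements
    have hN : ∀ p ∈ D' \ D, pos p.1 p.2 = true ∧ c p.1 = c p.2 ∧ (¬ kept p.1 ∨ ¬ kept p.2) := by
      intro p hp
      rcases Finset.mem_sdiff.1 hp with ⟨hp1, hp2⟩
      rw [hD', Finset.mem_filter] at hp1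
      obtain ⟨-, hlt, hdis⟩ := hp1
      have hnd : ¬ Disagree pos c p.1 p.2 := by
        intro hcon
        exact hp2 (by rw [hD, Finset.mem_filter]; exact ⟨Finset.mem_univ _, hlt, hcon⟩)
      rcases hdis with ⟨hpos, hne⟩ | ⟨hpos, heq⟩
      · have hcc : c p.1 = c p.2 := by
          by_contra hcc
          exact hnd (Or.inl ⟨hpos, hcc⟩)
        refine ⟨hpos, hcc, ?_⟩
        by_contra hcon
        push_neg at hcon
        exact hne (by rw [hc'kept _ hcon.1, hc'kept _ hcon.2, hcc])
      · exfalso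
        rcases em (kept p.1) with h1 | h1 <;> rcases em (kept p.2) with h2 | h2
        · have e1 := hc'kept _ h1; have e2 := hc'kept _ h2
          have : c p.1 = c p.2 := by omega
          exact hnd (Or.inr ⟨hpos, this⟩)
        · have e1 := hc'kept _ h1; have e2 := hc'not _ h2
          omega
        · have e1 := hc'not _ h1; have e2 := hc'kept _ h2
          omega
        · have e1 := hc'not _ h1; have e2 := hc'not _ h2
          have : p.1 = p.2 := hidxinj (by omega)
          exact absurd (this ▸ hlt) (lt_irrefl _)
    have hends : ∀ p ∈ D' \ D, p.1 ∈ clusterOf c (c p.1) ∧ p.2 ∈ clusterOf c (c p.1) := by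
      intro p hp
      exact ⟨mem_clusterOf.2 rfl, mem_clusterOf.2 (hN p hp).2.1.symm⟩
    set J := univ.image c with hJ
    have hfib : (D' \ D).card = ∑ j ∈ J, ((D' \ D).filter (fun p => c p.1 = j)).card :=
      Finset.card_eq_sum_card_fiberwise (fun p _ => Finset.mem_image_of_mem c (Finset.mem_univ p.1))
    have hperj : ∀ j ∈ J, (((D' \ D).filter (fun p => c p.1 = j)).card : ℝ)
        ≤ (1 / (2 * δ' ^ 2)) * ∑ v ∈ Bad ∩ clusterOf c j, (mcount pos c v : ℝ) := by
      intro j _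
      set Nj := (D' \ D).filter (fun p => c p.1 = j) with hNj
      have hNjmem : ∀ p ∈ Nj, p ∈ D' \ D ∧ c p.1 = j := by
        intro p hp; exact ⟨(Finset.mem_filter.1 hp).1, (Finset.mem_filter.1 hp).2⟩
      have hend : ∀ p ∈ Nj, p.1 ∈ clusterOf c j ∧ p.2 ∈ clusterOf c j := by
        intro p hp
        obtain ⟨hp1, hp2⟩ := hNjmem p hp
        refine ⟨mem_clusterOf.2 hp2, mem_clusterOf.2 ?_⟩
        rw [← (hN p hp1).2.1]; exact hp2
      have hlow : ∀ v ∈ Bad ∩ clusterOf c j,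
          δ' * ((clusterOf c j).card : ℝ) ≤ (mcount pos c v : ℝ) := by
        intro v hv
        rcases Finset.mem_inter.1 hv with ⟨hvB, hvC⟩
        have hbad : ¬ IsGood pos δ' v (clusterOf c (c v)) := by
          simpa [hBad] using hvB
        have := mcount_of_bad pos c v hbad
        rwa [mem_clusterOf.1 hvC] at this
      have hsumlow : ((Bad ∩ clusterOf c j).card : ℝ) * (δ' * ((clusterOf c j).card : ℝ))
          ≤ ∑ v ∈ Bad ∩ clusterOf c j, (mcount pos c v : ℝ) := by
        have := Finset.card_nsmul_le_sum (Bad ∩ clusterOf c j)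
          (fun v => (mcount pos c v : ℝ)) _ hlow
        rwa [nsmul_eq_mul] at this
      have hsum0 : (0:ℝ) ≤ ∑ v ∈ Bad ∩ clusterOf c j, (mcount pos c v : ℝ) :=
        Finset.sum_nonneg fun v _ => Nat.cast_nonneg _
      have hn0 : (0:ℝ) ≤ ((clusterOf c j).card : ℝ) := Nat.cast_nonneg _
      have hb0 : (0:ℝ) ≤ ((Bad ∩ clusterOf c j).card : ℝ) := Nat.cast_nonneg _
      by_cases hdis : Dis j
      · -- dissolved cluster: Nj contained in pairs of the cluster
        have h2card : 2 * Nj.card ≤ (clusterOf c j).card * (clusterOf c j).card := by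
          have hsubNj : Nj ⊆ clusterOf c j ×ˢ clusterOf c j := by
            intro p hp
            exact Finset.mem_product.2 ⟨(hend p hp).1, (hend p hp).2⟩
          have hsubNj' : Nj.image Prod.swap ⊆ clusterOf c j ×ˢ clusterOf c j := by
            intro p hp
            rcases Finset.mem_image.1 hp with ⟨q, hq, rfl⟩
            exact Finset.mem_product.2 ⟨(hend q hq).2, (hend q hq).1⟩
          have hdisj : Disjoint Nj (Nj.image Prod.swap) := by
            rw [Finset.disjoint_left]
            rintro p hp hp2
            rcases Finset.mem_image.1 hp2 with ⟨q, hq, rfl⟩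
            have l1 : q.2 < q.1 := by
              have := (hNjmem _ hp).1
              rw [hD', Finset.mem_filter] at *
              exact ((Finset.mem_filter.1 (Finset.mem_sdiff.1 this).1).2).1
            have l2 : q.1 < q.2 := by
              have := (hNjmem _ hq).1
              exact ((Finset.mem_filter.1 (Finset.mem_sdiff.1 ((Finset.mem_filter.1 hq).1)).1).2).1
            exact absurd (l1.trans l2) (lt_irrefl _)
          have := Finset.card_le_card (Finset.union_subset hsubNj hsubNj')
          rw [Finset.card_union_of_disjoint hdisj,
            Finset.card_image_of_injective _ Prod.swap_injective, Finset.card_product] at this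
          omega
        have h2card' : 2 * (Nj.card : ℝ) ≤ ((clusterOf c j).card : ℝ) * ((clusterOf c j).card : ℝ) := by
          exact_mod_cast h2card
        have hdis' : δ' * ((clusterOf c j).card : ℝ) ≤ ((Bad ∩ clusterOf c j).card : ℝ) := hdis
        rw [div_mul_eq_mul_div, le_div_iff₀ (by positivity)]
        nlinarith [mul_le_mul_of_nonneg_left hdis' (mul_nonneg hδ'0.le hn0),
          mul_nonneg hδ'0.le hn0]
      · -- kept cluster: each pair has a bad endpoint
        have hbadend : ∀ p ∈ Nj, p.1 ∈ Bad ∨ p.2 ∈ Bad := by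
          intro p hp
          obtain ⟨hp1, hp2⟩ := hNjmem p hp
          rcases (hN p hp1).2.2 with h | h
          · left
            by_contra hb
            exact h ⟨hb, by rw [hp2]; exact hdis⟩
          · right
            by_contra hb
            exact h ⟨hb, by rw [← (hN p hp1).2.1, hp2]; exact hdis⟩
        have hinj : Nj.card ≤ ((Bad ∩ clusterOf c j) ×ˢ clusterOf c j).card := by
          apply Finset.card_le_card_of_injOn (fun p => if p.1 ∈ Bad then p else p.swap)
          · intro p hp
            rcases hbadend p hp with hb | hb
            · dsimp only
              rw [if_pos hb]
              exact Finset.mem_product.2 ⟨Finset.mem_inter.2 ⟨hb, (hend p hp).1⟩, (hend p hp).2⟩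
            · by_cases hb1 : p.1 ∈ Bad
              · dsimp only
                rw [if_pos hb1]
                exact Finset.mem_product.2 ⟨Finset.mem_inter.2 ⟨hb1, (hend p hp).1⟩, (hend p hp).2⟩
              · dsimp only
                rw [if_neg hb1]
                exact Finset.mem_product.2 ⟨Finset.mem_inter.2 ⟨hb, (hend p hp).2⟩, (hend p hp).1⟩
          · intro p hp q hq hpq
            have hplt : p.1 < p.2 := by
              have := (hNjmem p (by simpa using hp)).1
              exact ((Finset.mem_filter.1 (Finset.mem_sdiff.1 this).1).2).1
            have hqlt : q.1 < q.2 := by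
              have := (hNjmem q (by simpa using hq)).1
              exact ((Finset.mem_filter.1 (Finset.mem_sdiff.1 this).1).2).1
            by_cases h1 : p.1 ∈ Bad <;> by_cases h2 : q.1 ∈ Bad <;>
              simp only [if_pos, if_neg, h1, h2, if_true, if_false] at hpq
            · exact hpq
            · rw [Prod.ext_iff] at hpq
              simp only [Prod.fst_swap, Prod.snd_swap] at hpq
              exact absurd ((hpq.1 ▸ hplt).trans (hpq.2 ▸ hqlt)) (lt_irrefl _)
            · rw [Prod.ext_iff] at hpq
              simp only [Prod.fst_swap, Prod.snd_swap] at hpq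
              exact absurd ((hpq.2 ▸ hplt).trans (hpq.1 ▸ hqlt)) (lt_irrefl _)
            · have := congrArg Prod.swap hpq
              rwa [Prod.swap_swap, Prod.swap_swap] at this
        have hinj' : (Nj.card : ℝ)
            ≤ ((Bad ∩ clusterOf c j).card : ℝ) * ((clusterOf c j).card : ℝ) := by
          rw [Finset.card_product] at hinj
          exact_mod_cast hinj
        rw [div_mul_eq_mul_div, le_div_iff₀ (by positivity)]
        nlinarith [mul_le_mul_of_nonneg_left hsumlow hδ'0.le,
          mul_nonneg hb0 hn0, mul_nonneg (mul_nonneg hb0 hn0) hδ'0.le]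
    -- assemble
    have hBadfib : ∀ j, Bad ∩ clusterOf c j = Bad.filter (fun v => c v = j) := by
      intro j
      ext u
      simp only [Finset.mem_inter, Finset.mem_filter, mem_clusterOf]
    have hsumall : ∑ j ∈ J, ∑ v ∈ Bad ∩ clusterOf c j, (mcount pos c v : ℝ)
        = ∑ v ∈ Bad, (mcount pos c v : ℝ) := by
      rw [Finset.sum_congr rfl (fun j _ => by rw [hBadfib j])]
      exact Finset.sum_fiberwise_of_maps_to (fun v _ => Finset.mem_image_of_mem c (Finset.mem_univ v)) _
    have hsumuniv : ∑ v ∈ Bad, (mcount pos c v : ℝ) ≤ ∑ v ∈ univ, (mcount pos c v : ℝ) :=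
      Finset.sum_le_sum_of_subset_of_nonneg (Finset.subset_univ _)
        (fun v _ _ => Nat.cast_nonneg _)
    have hsum2 : ∑ v ∈ univ, (mcount pos c v : ℝ) = 2 * (disagreements pos c : ℝ) := by
      have := sum_mcount pos hsym c
      exact_mod_cast congrArg (Nat.cast : ℕ → ℝ) this
    have hnew : ((D' \ D).card : ℝ) ≤ (1 / (2 * δ' ^ 2)) * (2 * (disagreements pos c : ℝ)) := by
      calc ((D' \ D).card : ℝ) = ∑ j ∈ J, (((D' \ D).filter (fun p => c p.1 = j)).card : ℝ) := by
            exact_mod_cast congrArg (Nat.cast : ℕ → ℝ) hfib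
        _ ≤ ∑ j ∈ J, (1 / (2 * δ' ^ 2)) * ∑ v ∈ Bad ∩ clusterOf c j, (mcount pos c v : ℝ) :=
            Finset.sum_le_sum hperj
        _ = (1 / (2 * δ' ^ 2)) * ∑ j ∈ J, ∑ v ∈ Bad ∩ clusterOf c j, (mcount pos c v : ℝ) := by
            rw [Finset.mul_sum]
        _ ≤ (1 / (2 * δ' ^ 2)) * (2 * (disagreements pos c : ℝ)) := by
            rw [hsumall]
            have h0 : (0:ℝ) ≤ 1 / (2 * δ' ^ 2) := by positivity
            apply mul_le_mul_of_nonneg_left _ h0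
            rw [← hsum2]
            exact hsumuniv
    have hfinal : (disagreements pos c' : ℝ) ≤ (disagreements pos c : ℝ)
        + (1 / (2 * δ' ^ 2)) * (2 * (disagreements pos c : ℝ)) := by
      have h1 : (disagreements pos c' : ℝ) ≤ (disagreements pos c : ℝ) + ((D' \ D).card : ℝ) := by
        rw [hDcard, hD'card]
        exact_mod_cast hsplit
      linarith
    have hcoef : (1 / (2 * δ' ^ 2)) * 2 = 9 / δ ^ 2 := by
      rw [hδ']
      field_simp
      ring
    calc (disagreements pos c' : ℝ)
        ≤ (disagreements pos c : ℝ) + (1 / (2 * δ' ^ 2)) * (2 * (disagreements pos c : ℝ)) :=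
          hfinal
      _ = ((1 / (2 * δ' ^ 2)) * 2 + 1) * (disagreements pos c : ℝ) := by ring
      _ = (9 / δ ^ 2 + 1) * (disagreements pos c : ℝ) := by rw [hcoef]

end Main

/-- There exists a clustering `OPT'` in which every non-singleton cluster is `δ`-clean
and whose number of disagreements is at most `(9/δ² + 1)` times the minimum number of
disagreements (i.e. at most `(9/δ² + 1)` times the cost of every clustering). -/
theorem exists_clean_clustering {V : Type*} [Fintype V] [LinearOrder V]
    (pos : V → V → Bool) (hsym : ∀ u v, pos u v = pos v u)
    (δ : ℝ) (hδ0 : 0 < δ) (hδ1 : δ < 1) :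
    ∃ c' : V → ℕ,
      (∀ i : ℕ, 2 ≤ (Finset.univ.filter (fun v => c' v = i)).card →
        IsClean pos δ (Finset.univ.filter (fun v => c' v = i))) ∧
      (∀ c : V → ℕ,
        (disagreements pos c' : ℝ) ≤ (9 / δ ^ 2 + 1) * (disagreements pos c : ℝ)) := by
  have hex : ∃ n : ℕ, ∃ c : V → ℕ, disagreements pos c = n := ⟨_, fun _ => 0, rfl⟩
  obtain ⟨c₀, hc₀⟩ := Nat.find_spec hex
  have hmin : ∀ c : V → ℕ, Nat.find hex ≤ disagreements pos c := fun c =>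
    Nat.find_min' hex ⟨c, rfl⟩
  obtain ⟨c', h1, h2⟩ := exists_clean_of pos hsym δ hδ0 hδ1 c₀
  refine ⟨c', h1, fun c => le_trans h2 ?_⟩
  have hco : disagreements pos c₀ ≤ disagreements pos c := hc₀ ▸ hmin c
  have hnonneg : (0:ℝ) ≤ 9 / δ ^ 2 + 1 := by positivity
  exact mul_le_mul_of_nonneg_left (by exact_mod_cast hco) hnonneg
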